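/- For the multiple star product in tensor form, associativity follows from the identity: [(F ⋆_K G)_⊗ ⋆_K H]_⊗ = exp{ℏ(𝒦_{x,y} + 𝒦_{x,z} + 𝒦_{y,z})}(F ⊗ G ⊗ H) = [F ⋆_K (G ⋆_K H)_⊗]_⊗, where 𝒦_{x,y}, 𝒦_{x,z}, 𝒦_{y,z} are the pairwise-commuting bi-differential operators Σ_{ij} K_{ij} ∂_{i,x}⊗∂_{j,y}⊗id etc., acting on the respective tensor slots. -/

import Mathlib

/- Statement 19: associativity of the tensor-form star product via the
identity `[(F ⋆_K G)_⊗ ⋆_K H]_⊗ = exp{ℏ(𝒦_{x,y}+𝒦_{x,z}+𝒦_{y,z})}(F⊗G⊗H)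
= [F ⋆_K (G ⋆_K H)_⊗]_⊗`, where `F, G, H` are tensor products of polynomials
in three disjoint groups of slots (`a` slots of `x`-type, `b` of `y`-type,
`c` of `z`-type, each carrying `d` variables) and
`𝒦_{x,y} = Σ_{ij} K_{ij} ∂_{i,x} ⊗ ∂_{j,y} ⊗ id`, etc.  Since `H` is untouched
by `𝒦_{x,y}`, `(F ⋆_K G)_⊗ ⊗ H = exp{ℏ𝒦_{x,y}}(F⊗G⊗H)`. -/

open MvPolynomial

namespace StarAux19
open MvPolynomial Finset

variable {R : Type} [CommRing R] {σ : Type}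


theorem pderiv_pderiv' (u v : σ) (p : MvPolynomial σ R) :
    pderiv u (pderiv v p) = pderiv v (pderiv u p) := by
  classical
  induction p using MvPolynomial.induction_on with
  | C a => simp
  | add p q hp hq => simp [hp, hq]
  | mul_X p i hp =>
    simp only [pderiv_mul, map_add, hp, pderiv_X, Pi.single_apply]
    split_ifs <;> simp <;> ring

/-- polynomials of total degree `< k` (together with `0`). -/
def degLT (k : ℕ) : Submodule R (MvPolynomial σ R) where
  carrier := {p | p ≠ 0 → p.totalDegree < k}
  zero_mem' := fun h => absurd rfl h
  add_mem' := by
    intro p q hp hq hpq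
    rcases eq_or_ne p 0 with rfl | hp0
    · simpa using hq (by simpa using hpq)
    rcases eq_or_ne q 0 with rfl | hq0
    · simpa using hp (by simpa using hpq)
    exact lt_of_le_of_lt (totalDegree_add p q) (max_lt (hp hp0) (hq hq0))
  smul_mem' := by
    intro c p hp hcp
    have hp0 : p ≠ 0 := by rintro rfl; simp at hcp
    exact lt_of_le_of_lt (totalDegree_smul_le c p) (hp hp0)

theorem degLT_mono {k l : ℕ} (h : k ≤ l) : degLT (R := R) (σ := σ) k ≤ degLT l :=
  fun _ hp hne => lt_of_lt_of_le (hp hne) h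

theorem eq_zero_of_mem_degLT_zero {p : MvPolynomial σ R} (h : p ∈ degLT (R := R) 0) :
    p = 0 := by
  by_contra hne
  exact Nat.not_lt_zero _ (h hne)

theorem mem_degLT_self (p : MvPolynomial σ R) : p ∈ degLT (R := R) (p.totalDegree + 1) :=
  fun _ => Nat.lt_succ_self _

theorem weight_sub_single {m : σ →₀ ℕ} {u : σ} (h : m u ≠ 0) :
    ((m - Finsupp.single u 1).sum fun _ e => e) + 1 = m.sum fun _ e => e := by
  have hle : Finsupp.single u 1 ≤ m := by
    rw [Finsupp.single_le_iff]; omega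
  have : (m - Finsupp.single u 1) + Finsupp.single u 1 = m := tsub_add_cancel_of_le hle
  calc ((m - Finsupp.single u 1).sum fun _ e => e) + 1
      = ((m - Finsupp.single u 1).sum fun _ e => e) +
          ((Finsupp.single u 1).sum fun _ e => e) := by
        rw [Finsupp.sum_single_index]; rfl
    _ = ((m - Finsupp.single u 1) + Finsupp.single u 1).sum fun _ e => e := by
        rw [Finsupp.sum_add_index'] <;> simp
    _ = m.sum fun _ e => e := by rw [this]

theorem totalDegree_pderiv_lt {u : σ} {p : MvPolynomial σ R} (h : pderiv u p ≠ 0) :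
    (pderiv u p).totalDegree < p.totalDegree := by
  classical
  have hrep : pderiv u p = ∑ m ∈ p.support, monomial (m - Finsupp.single u 1) (coeff m p * m u) := by
    conv_lhs => rw [p.as_sum]
    rw [map_sum]
    simp [pderiv_monomial]
  have hex : ∃ m ∈ p.support, m u ≠ 0 := by
    by_contra hall
    push_neg at hall
    apply h
    rw [hrep]
    refine Finset.sum_eq_zero fun m hm => by rw [hall m hm, Nat.cast_zero, mul_zero]; simp
  obtain ⟨m₀, hm₀, hm₀u⟩ := hex
  have h1 : 1 ≤ p.totalDegree := by
    refine le_trans ?_ (le_totalDegree hm₀)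
    have := Finset.single_le_sum (f := fun a => m₀ a) (fun a _ => Nat.zero_le _)
      (Finsupp.mem_support_iff.mpr hm₀u)
    calc 1 ≤ m₀ u := by omega
      _ ≤ m₀.sum fun _ e => e := by
          simpa [Finsupp.sum] using this
  have hbound : (pderiv u p).totalDegree ≤ p.totalDegree - 1 := by
    rw [hrep]
    refine totalDegree_finsetSum_le fun m hm => ?_
    rcases eq_or_ne (m u) 0 with hmu | hmu
    · simp [hmu]
    refine le_trans (totalDegree_monomial_le _ _) ?_
    have hw := weight_sub_single (m := m) hmu
    have hm' := le_totalDegree (p := p) hm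
    simp only [Function.id_def]
    omega
  omega

/-- An endomorphism that strictly lowers total degree. -/
def Lowering (L : Module.End R (MvPolynomial σ R)) : Prop :=
  ∀ k : ℕ, ∀ p ∈ degLT (R := R) (σ := σ) (k + 1), L p ∈ degLT k

theorem lowering_pderiv (u : σ) : Lowering ((pderiv (R := R) u).toLinearMap) := by
  intro k p hp hne
  have hp0 : p ≠ 0 := fun h => hne (by simp [h])
  exact lt_of_lt_of_le (totalDegree_pderiv_lt hne) (Nat.lt_succ_iff.mp (hp hp0))

theorem Lowering.sum {ι : Type*} {s : Finset ι} {L : ι → Module.End R (MvPolynomial σ R)}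
    (h : ∀ i ∈ s, Lowering (L i)) : Lowering (∑ i ∈ s, L i) := by
  intro k p hp
  rw [LinearMap.sum_apply]
  exact Submodule.sum_mem _ fun i hi => h i hi k p hp

theorem Lowering.smul {L : Module.End R (MvPolynomial σ R)} (r : R) (h : Lowering L) :
    Lowering (r • L) := by
  intro k p hp
  rw [LinearMap.smul_apply]
  exact Submodule.smul_mem _ _ (h k p hp)

theorem Lowering.mul {L M : Module.End R (MvPolynomial σ R)} (hL : Lowering L)
    (hM : Lowering M) : Lowering (L * M) := by
  intro k p hp
  rw [Module.End.mul_apply]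
  exact hL k _ (degLT_mono (Nat.le_succ k) (hM k p hp))

theorem Lowering.add {L M : Module.End R (MvPolynomial σ R)} (hL : Lowering L)
    (hM : Lowering M) : Lowering (L + M) := by
  intro k p hp
  rw [LinearMap.add_apply]
  exact Submodule.add_mem _ (hL k p hp) (hM k p hp)

theorem Lowering.mem {L : Module.End R (MvPolynomial σ R)} (hL : Lowering L)
    {k : ℕ} {p : MvPolynomial σ R} (hp : p ∈ degLT (R := R) k) : L p ∈ degLT (R := R) k := by
  cases k with
  | zero => rw [eq_zero_of_mem_degLT_zero hp]; simpa using (degLT (R := R) (σ := σ) 0).zero_mem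
  | succ k => exact degLT_mono (Nat.le_succ k) (hL k p hp)

theorem Lowering.pow_mem {L : Module.End R (MvPolynomial σ R)} (hL : Lowering L)
    (n : ℕ) : ∀ (k : ℕ) (p : MvPolynomial σ R), p ∈ degLT (R := R) (k + n) →
      (L ^ n) p ∈ degLT (R := R) k := by
  induction n with
  | zero => intro k p hp; simpa using hp
  | succ n ih =>
    intro k p hp
    rw [pow_succ, Module.End.mul_apply]
    exact ih k (L p) (hL (k + n) p (by rwa [Nat.add_succ] at hp))

theorem Lowering.pow_mem' {L : Module.End R (MvPolynomial σ R)} (hL : Lowering L)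
    (n : ℕ) {k : ℕ} {p : MvPolynomial σ R} (hp : p ∈ degLT (R := R) k) :
    (L ^ n) p ∈ degLT (R := R) k := by
  induction n with
  | zero => simpa using hp
  | succ n ih => rw [pow_succ', Module.End.mul_apply]; exact hL.mem ih

theorem Lowering.pow_eq_zero {L : Module.End R (MvPolynomial σ R)} (hL : Lowering L)
    {n : ℕ} {p : MvPolynomial σ R} (hp : p ∈ degLT (R := R) n) : (L ^ n) p = 0 :=
  eq_zero_of_mem_degLT_zero (hL.pow_mem n 0 p (by simpa using hp))

theorem triangle_sum {M : Type*} [AddCommMonoid M] (N : ℕ) (T : ℕ → ℕ → M)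
    (hT : ∀ m n, N ≤ m + n → T m n = 0) :
    ∑ m ∈ Finset.range N, ∑ n ∈ Finset.range N, T m n
      = ∑ k ∈ Finset.range N, ∑ q ∈ Finset.HasAntidiagonal.antidiagonal k, T q.1 q.2 := by
  have hdisj : (↑(Finset.range N) : Set ℕ).PairwiseDisjoint Finset.HasAntidiagonal.antidiagonal := by
    intro k _ l _ hkl
    refine Finset.disjoint_left.mpr fun q hq hq' => ?_
    rw [Finset.HasAntidiagonal.mem_antidiagonal] at hq hq'
    exact hkl (hq ▸ hq')
  rw [← Finset.sum_product', ← Finset.sum_biUnion hdisj]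
  refine (Finset.sum_subset ?_ ?_).symm
  · intro q hq
    rw [Finset.mem_biUnion] at hq
    obtain ⟨k, hk, hq⟩ := hq
    rw [Finset.HasAntidiagonal.mem_antidiagonal] at hq
    rw [Finset.mem_range] at hk
    rw [Finset.mem_product, Finset.mem_range, Finset.mem_range]
    omega
  · intro q hq hq'
    refine hT q.1 q.2 ?_
    by_contra hlt
    exact hq' (Finset.mem_biUnion.mpr ⟨q.1 + q.2, Finset.mem_range.mpr (by omega),
      Finset.HasAntidiagonal.mem_antidiagonal.mpr rfl⟩)

theorem exp_exp {R : Type} [CommRing R] [Algebra ℚ R] {σ : Type} (ℏ : R)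
    {A B : Module.End R (MvPolynomial σ R)} (hA : Lowering A) (hB : Lowering B)
    (hAB : Commute A B) (p : MvPolynomial σ R) :
    (∑ᶠ m : ℕ, (m.factorial : ℚ)⁻¹ •
        (ℏ ^ m • ((A ^ m) (∑ᶠ n : ℕ, (n.factorial : ℚ)⁻¹ • (ℏ ^ n • ((B ^ n) p))))))
      = ∑ᶠ n : ℕ, (n.factorial : ℚ)⁻¹ • (ℏ ^ n • (((A + B) ^ n) p)) := by
  set N := p.totalDegree + 1 with hN
  have hpN : p ∈ degLT (R := R) N := mem_degLT_self p
  have hzero : ∀ m n, N ≤ m + n → (A ^ m) ((B ^ n) p) = 0 := by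
    intro m n h
    have h2 : (B ^ n) p ∈ degLT (R := R) m :=
      hB.pow_mem n m p (degLT_mono (by omega) hpN)
    exact eq_zero_of_mem_degLT_zero (hA.pow_mem m 0 _ (by rwa [Nat.zero_add]))
  set T : ℕ → ℕ → MvPolynomial σ R := fun m n =>
    ((m.factorial : ℚ)⁻¹ * (n.factorial : ℚ)⁻¹) • (ℏ ^ (m + n) • (A ^ m) ((B ^ n) p)) with hT
  have hTzero : ∀ m n, N ≤ m + n → T m n = 0 := by
    intro m n h; rw [hT]; simp [hzero m n h]
  have hBsum : (∑ᶠ n : ℕ, (n.factorial : ℚ)⁻¹ • (ℏ ^ n • ((B ^ n) p)))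
      = ∑ n ∈ Finset.range N, (n.factorial : ℚ)⁻¹ • (ℏ ^ n • ((B ^ n) p)) := by
    refine finsum_eq_sum_of_support_subset _ fun n hn => ?_
    rw [Finset.coe_range, Set.mem_Iio]
    by_contra hnN
    have h0 := hzero 0 n (by omega)
    rw [pow_zero, Module.End.one_apply] at h0
    exact Function.mem_support.mp hn (by rw [h0, smul_zero, smul_zero])
  have hq : (∑ n ∈ Finset.range N, (n.factorial : ℚ)⁻¹ • (ℏ ^ n • ((B ^ n) p)))
      ∈ degLT (R := R) N :=
    Submodule.sum_mem _ fun n _ => Submodule.smul_of_tower_mem _ _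
      (Submodule.smul_mem _ _ (hB.pow_mem' n hpN))
  rw [hBsum]
  have hLsum : (∑ᶠ m : ℕ, (m.factorial : ℚ)⁻¹ •
        (ℏ ^ m • ((A ^ m) (∑ n ∈ Finset.range N, (n.factorial : ℚ)⁻¹ • (ℏ ^ n • ((B ^ n) p))))))
      = ∑ m ∈ Finset.range N, (m.factorial : ℚ)⁻¹ •
        (ℏ ^ m • ((A ^ m) (∑ n ∈ Finset.range N, (n.factorial : ℚ)⁻¹ • (ℏ ^ n • ((B ^ n) p))))) := by
    refine finsum_eq_sum_of_support_subset _ fun m hm => ?_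
    rw [Finset.coe_range, Set.mem_Iio]
    by_contra hmN
    have h0 : (A ^ m) (∑ n ∈ Finset.range N, (n.factorial : ℚ)⁻¹ • (ℏ ^ n • ((B ^ n) p))) = 0 :=
      eq_zero_of_mem_degLT_zero (hA.pow_mem m 0 _
        (by rw [Nat.zero_add]; exact degLT_mono (by omega) hq))
    exact Function.mem_support.mp hm (by rw [h0, smul_zero, smul_zero])
  have hRsum : (∑ᶠ n : ℕ, (n.factorial : ℚ)⁻¹ • (ℏ ^ n • (((A + B) ^ n) p)))
      = ∑ k ∈ Finset.range N, (k.factorial : ℚ)⁻¹ • (ℏ ^ k • (((A + B) ^ k) p)) := by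
    refine finsum_eq_sum_of_support_subset _ fun k hk => ?_
    rw [Finset.coe_range, Set.mem_Iio]
    by_contra hkN
    have h0 : ((A + B) ^ k) p = 0 :=
      (hA.add hB).pow_eq_zero (degLT_mono (by omega) hpN)
    exact Function.mem_support.mp hk (by rw [h0, smul_zero, smul_zero])
  rw [hLsum, hRsum]
  calc ∑ m ∈ Finset.range N, (m.factorial : ℚ)⁻¹ •
        (ℏ ^ m • ((A ^ m) (∑ n ∈ Finset.range N, (n.factorial : ℚ)⁻¹ • (ℏ ^ n • ((B ^ n) p)))))
      = ∑ m ∈ Finset.range N, ∑ n ∈ Finset.range N, T m n := by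
        refine Finset.sum_congr rfl fun m _ => ?_
        rw [map_sum, Finset.smul_sum, Finset.smul_sum]
        refine Finset.sum_congr rfl fun n _ => ?_
        rw [LinearMap.map_smul_of_tower, LinearMap.map_smul, hT]
        rw [smul_comm (ℏ ^ m) ((n.factorial : ℚ)⁻¹), smul_smul ((m.factorial : ℚ)⁻¹),
          smul_smul (ℏ ^ m), ← pow_add]
    _ = ∑ k ∈ Finset.range N, ∑ q ∈ Finset.HasAntidiagonal.antidiagonal k, T q.1 q.2 :=
        triangle_sum N T hTzero
    _ = ∑ k ∈ Finset.range N, (k.factorial : ℚ)⁻¹ • (ℏ ^ k • (((A + B) ^ k) p)) := by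
        refine Finset.sum_congr rfl fun k _ => ?_
        rw [hAB.add_pow' k, LinearMap.sum_apply, Finset.smul_sum, Finset.smul_sum]
        refine Finset.sum_congr rfl fun q hq => ?_
        rw [Finset.HasAntidiagonal.mem_antidiagonal] at hq
        rw [LinearMap.smul_apply, Module.End.mul_apply, ← Nat.cast_smul_eq_nsmul ℚ,
          smul_comm (ℏ ^ k) ((k.choose q.1 : ℚ)), smul_smul ((k.factorial : ℚ)⁻¹)]
        have hfact : (k.factorial : ℚ)⁻¹ * (k.choose q.1 : ℚ)
            = (q.1.factorial : ℚ)⁻¹ * (q.2.factorial : ℚ)⁻¹ := by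
          have h1 : q.1 ≤ k := by omega
          rw [Nat.cast_choose ℚ h1]
          have e2 : k - q.1 = q.2 := by omega
          rw [e2, div_eq_mul_inv, ← mul_assoc,
            inv_mul_cancel₀ (Nat.cast_ne_zero.mpr k.factorial_ne_zero), one_mul, mul_inv]
        rw [hfact]
        simp only [hT]
        rw [hq]

theorem commute_pderiv (u v : σ) :
    Commute ((pderiv (R := R) u).toLinearMap) ((pderiv (R := R) v).toLinearMap) :=
  LinearMap.ext fun p => pderiv_pderiv' u v p

theorem commute_pderiv_sums {ι₁ ι₂ : Type} (s : Finset ι₁) (t : Finset ι₂)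
    (f : ι₁ → σ) (g : ι₂ → σ) :
    Commute (∑ i ∈ s, ((pderiv (R := R) (f i)).toLinearMap))
      (∑ j ∈ t, ((pderiv (R := R) (g j)).toLinearMap)) :=
  Commute.sum_left _ _ _ fun i _ => Commute.sum_right _ _ _ fun j _ =>
    commute_pderiv (f i) (g j)

end StarAux19


noncomputable section

variable {R : Type} [CommRing R] [Algebra ℚ R]

variable (a b c d : ℕ)

/-- ambient algebra: three groups of slots, each slot with `d` variables. -/
abbrev Amb (R : Type) [CommRing R] :=
  MvPolynomial ((Fin a ⊕ (Fin b ⊕ Fin c)) × Fin d) R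

/-- total `x`-derivative `∂_{i,⊗^a}` acting on the first group. -/
def Dx (i : Fin d) : Module.End R (Amb a b c d R) :=
  ∑ s : Fin a, (pderiv ((Sum.inl s : Fin a ⊕ (Fin b ⊕ Fin c)), i)).toLinearMap

/-- total `y`-derivative acting on the second group. -/
def Dy (i : Fin d) : Module.End R (Amb a b c d R) :=
  ∑ s : Fin b, (pderiv ((Sum.inr (Sum.inl s) : Fin a ⊕ (Fin b ⊕ Fin c)), i)).toLinearMap

/-- total `z`-derivative acting on the third group. -/
def Dz (i : Fin d) : Module.End R (Amb a b c d R) :=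
  ∑ s : Fin c, (pderiv ((Sum.inr (Sum.inr s) : Fin a ⊕ (Fin b ⊕ Fin c)), i)).toLinearMap

/-- `exp{ℏ L} p = Σ_n (ℏ^n/n!) Lⁿ p`. -/
def expApp (ℏ : R) (L : Module.End R (Amb a b c d R)) (p : Amb a b c d R) :
    Amb a b c d R :=
  finsum fun n : ℕ => (n.factorial : ℚ)⁻¹ • (ℏ ^ n • ((L ^ n) p))

/-- tensor-form associativity via
`exp{ℏ(𝒦_{x,y}+𝒦_{x,z}+𝒦_{y,z})}`. -/
theorem tensor_star_assoc (ℏ : R) (K : Fin d → Fin d → R)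
    (f : Fin a → MvPolynomial (Fin d) R) (g : Fin b → MvPolynomial (Fin d) R)
    (h : Fin c → MvPolynomial (Fin d) R) :
    let Kxy : Module.End R (Amb a b c d R) :=
      ∑ i : Fin d, ∑ j : Fin d, K i j • (Dx a b c d i ∘ₗ Dy a b c d j)
    let Kxz : Module.End R (Amb a b c d R) :=
      ∑ i : Fin d, ∑ j : Fin d, K i j • (Dx a b c d i ∘ₗ Dz a b c d j)
    let Kyz : Module.End R (Amb a b c d R) :=
      ∑ i : Fin d, ∑ j : Fin d, K i j • (Dy a b c d i ∘ₗ Dz a b c d j)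
    let FGH : Amb a b c d R :=
      (∏ s : Fin a, rename (fun t => ((Sum.inl s : Fin a ⊕ (Fin b ⊕ Fin c)), t)) (f s)) *
        (∏ s : Fin b, rename (fun t => ((Sum.inr (Sum.inl s) : Fin a ⊕ (Fin b ⊕ Fin c)), t)) (g s)) *
          ∏ s : Fin c, rename (fun t => ((Sum.inr (Sum.inr s) : Fin a ⊕ (Fin b ⊕ Fin c)), t)) (h s)
    expApp a b c d ℏ (Kxz + Kyz) (expApp a b c d ℏ Kxy FGH) =
        expApp a b c d ℏ (Kxy + Kxz + Kyz) FGH ∧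
      expApp a b c d ℏ (Kxy + Kxz) (expApp a b c d ℏ Kyz FGH) =
        expApp a b c d ℏ (Kxy + Kxz + Kyz) FGH := by
  intro Kxy Kxz Kyz FGH
  have hDx : ∀ i : Fin d, StarAux19.Lowering (Dx a b c d i) := fun i => by
    unfold Dx
    exact StarAux19.Lowering.sum (R := R) fun s _ => StarAux19.lowering_pderiv _
  have hDy : ∀ i : Fin d, StarAux19.Lowering (Dy a b c d i) := fun i => by
    unfold Dy
    exact StarAux19.Lowering.sum (R := R) fun s _ => StarAux19.lowering_pderiv _
  have hDz : ∀ i : Fin d, StarAux19.Lowering (Dz a b c d i) := fun i => by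
    unfold Dz
    exact StarAux19.Lowering.sum (R := R) fun s _ => StarAux19.lowering_pderiv _
  have hKl : ∀ P Q : Fin d → Module.End R (Amb a b c d R),
      (∀ i, StarAux19.Lowering (P i)) → (∀ i, StarAux19.Lowering (Q i)) →
      StarAux19.Lowering (∑ i : Fin d, ∑ j : Fin d, K i j • (P i ∘ₗ Q j)) := by
    intro P Q hP hQ
    refine StarAux19.Lowering.sum fun i _ => StarAux19.Lowering.sum fun j _ =>
      StarAux19.Lowering.smul _ ?_
    rw [← Module.End.mul_eq_comp]
    exact (hP i).mul (hQ j)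
  have hLxy : StarAux19.Lowering Kxy := hKl _ _ hDx hDy
  have hLxz : StarAux19.Lowering Kxz := hKl _ _ hDx hDz
  have hLyz : StarAux19.Lowering Kyz := hKl _ _ hDy hDz
  have hxx : ∀ i i' : Fin d, Commute (Dx a b c d i) (Dx a b c d i') := fun i i' => by
    unfold Dx
    exact StarAux19.commute_pderiv_sums (R := R) Finset.univ Finset.univ
      (fun s : Fin a => ((Sum.inl s : Fin a ⊕ (Fin b ⊕ Fin c)), i))
      (fun s : Fin a => ((Sum.inl s : Fin a ⊕ (Fin b ⊕ Fin c)), i'))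
  have hxy : ∀ i i' : Fin d, Commute (Dx a b c d i) (Dy a b c d i') := fun i i' => by
    unfold Dx Dy
    exact StarAux19.commute_pderiv_sums (R := R) Finset.univ Finset.univ
      (fun s : Fin a => ((Sum.inl s : Fin a ⊕ (Fin b ⊕ Fin c)), i))
      (fun s : Fin b => ((Sum.inr (Sum.inl s) : Fin a ⊕ (Fin b ⊕ Fin c)), i'))
  have hxz : ∀ i i' : Fin d, Commute (Dx a b c d i) (Dz a b c d i') := fun i i' => by
    unfold Dx Dz
    exact StarAux19.commute_pderiv_sums (R := R) Finset.univ Finset.univ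
      (fun s : Fin a => ((Sum.inl s : Fin a ⊕ (Fin b ⊕ Fin c)), i))
      (fun s : Fin c => ((Sum.inr (Sum.inr s) : Fin a ⊕ (Fin b ⊕ Fin c)), i'))
  have hyy : ∀ i i' : Fin d, Commute (Dy a b c d i) (Dy a b c d i') := fun i i' => by
    unfold Dy
    exact StarAux19.commute_pderiv_sums (R := R) Finset.univ Finset.univ
      (fun s : Fin b => ((Sum.inr (Sum.inl s) : Fin a ⊕ (Fin b ⊕ Fin c)), i))
      (fun s : Fin b => ((Sum.inr (Sum.inl s) : Fin a ⊕ (Fin b ⊕ Fin c)), i'))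
  have hyz : ∀ i i' : Fin d, Commute (Dy a b c d i) (Dz a b c d i') := fun i i' => by
    unfold Dy Dz
    exact StarAux19.commute_pderiv_sums (R := R) Finset.univ Finset.univ
      (fun s : Fin b => ((Sum.inr (Sum.inl s) : Fin a ⊕ (Fin b ⊕ Fin c)), i))
      (fun s : Fin c => ((Sum.inr (Sum.inr s) : Fin a ⊕ (Fin b ⊕ Fin c)), i'))
  have hzz : ∀ i i' : Fin d, Commute (Dz a b c d i) (Dz a b c d i') := fun i i' => by
    unfold Dz
    exact StarAux19.commute_pderiv_sums (R := R) Finset.univ Finset.univ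
      (fun s : Fin c => ((Sum.inr (Sum.inr s) : Fin a ⊕ (Fin b ⊕ Fin c)), i))
      (fun s : Fin c => ((Sum.inr (Sum.inr s) : Fin a ⊕ (Fin b ⊕ Fin c)), i'))
  have hcK : ∀ P Q P' Q' : Fin d → Module.End R (Amb a b c d R),
      (∀ i j, Commute (P i) (P' j)) → (∀ i j, Commute (P i) (Q' j)) →
      (∀ i j, Commute (Q i) (P' j)) → (∀ i j, Commute (Q i) (Q' j)) →
      Commute (∑ i : Fin d, ∑ j : Fin d, K i j • (P i ∘ₗ Q j))
        (∑ i : Fin d, ∑ j : Fin d, K i j • (P' i ∘ₗ Q' j)) := by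
    intro P Q P' Q' h1 h2 h3 h4
    refine Commute.sum_left _ _ _ fun i _ => Commute.sum_left _ _ _ fun j _ => ?_
    refine Commute.sum_right _ _ _ fun i' _ => Commute.sum_right _ _ _ fun j' _ => ?_
    refine Commute.smul_right (Commute.smul_left ?_ _) _
    rw [← Module.End.mul_eq_comp, ← Module.End.mul_eq_comp]
    exact Commute.mul_left ((h1 i i').mul_right (h2 i j'))
      ((h3 j i').mul_right (h4 j j'))
  have hCxyxz : Commute Kxy Kxz :=
    hcK _ _ _ _ hxx hxz (fun i j => (hxy j i).symm) hyz
  have hCxyyz : Commute Kxy Kyz := hcK _ _ _ _ hxy hxz hyy hyz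
  have hCxzyz : Commute Kxz Kyz :=
    hcK _ _ _ _ hxy hxz (fun i j => (hyz j i).symm) hzz
  constructor
  · have hA := StarAux19.Lowering.add hLxz hLyz
    have hAB : Commute (Kxz + Kyz) Kxy := Commute.add_left hCxyxz.symm hCxyyz.symm
    have e : Kxz + Kyz + Kxy = Kxy + Kxz + Kyz := by abel
    simp only [expApp]
    rw [StarAux19.exp_exp ℏ hA hLxy hAB, e]
  · have hA := StarAux19.Lowering.add hLxy hLxz
    have hAB : Commute (Kxy + Kxz) Kyz := Commute.add_left hCxyyz hCxzyz
    simp only [expApp]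
    rw [StarAux19.exp_exp ℏ hA hLyz hAB]


end
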